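/- For all distinct positive real numbers a and b, S(Q(a,b), G(a,b)) > A(a,b) > I(a,b). -/

import Mathlib

noncomputable def A (a b : ℝ) : ℝ := (a + b) / 2
noncomputable def G (a b : ℝ) : ℝ := Real.sqrt (a * b)
noncomputable def Q (a b : ℝ) : ℝ := Real.sqrt ((a ^ 2 + b ^ 2) / 2)
noncomputable def S (a b : ℝ) : ℝ := (a ^ a * b ^ b) ^ (1 / (a + b))
noncomputable def I (a b : ℝ) : ℝ := (1 / Real.exp 1) * (a ^ a / b ^ b) ^ (1 / (a - b))

open Real Set

lemma pos_on_Ioo {f f' : ℝ → ℝ} (hc : ContinuousOn f (Ico 0 1))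
    (hd : ∀ t ∈ Ioo (0:ℝ) 1, HasDerivAt f (f' t) t)
    (hp : ∀ t ∈ Ioo (0:ℝ) 1, 0 < f' t) (h0 : f 0 = 0) :
    ∀ t ∈ Ioo (0:ℝ) 1, 0 < f t := by
  have hm : StrictMonoOn f (Ico 0 1) := by
    apply strictMonoOn_of_deriv_pos (convex_Ico 0 1) hc
    intro t ht
    rw [interior_Ico] at ht
    rw [(hd t ht).deriv]
    exact hp t ht
  intro t ht
  have := hm (left_mem_Ico.2 one_pos) ⟨ht.1.le, ht.2⟩ ht.1
  simpa [h0] using this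

lemma d_log1p {t : ℝ} (h : 0 < 1 + t) : HasDerivAt (fun u : ℝ => Real.log (1 + u)) (1/(1+t)) t := by
  have := (Real.hasDerivAt_log h.ne').comp t ((hasDerivAt_id t).const_add 1)
  simpa [one_div, Function.comp_def] using this

lemma d_log1m {t : ℝ} (h : 0 < 1 - t) : HasDerivAt (fun u : ℝ => Real.log (1 - u)) (-(1/(1-t))) t := by
  have := (Real.hasDerivAt_log h.ne').comp t ((hasDerivAt_id t).const_sub 1)
  simpa [one_div, Function.comp_def] using this

lemma d_log1sq {t : ℝ} : HasDerivAt (fun u : ℝ => Real.log (1 + u^2)) (2*t/(1+t^2)) t := by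
  have h : (0:ℝ) < 1 + t^2 := by positivity
  have := (Real.hasDerivAt_log h.ne').comp t (((hasDerivAt_pow 2 t)).const_add 1)
  refine this.congr_deriv ?_
  field_simp
  ring

lemma cont1p : ContinuousOn (fun u : ℝ => Real.log (1 + u)) (Ico 0 1) := by
  apply ContinuousOn.log (by fun_prop)
  intro x hx; simp only [mem_Ico] at hx; nlinarith [hx.1]

lemma cont1m : ContinuousOn (fun u : ℝ => Real.log (1 - u)) (Ico 0 1) := by
  apply ContinuousOn.log (by fun_prop)
  intro x hx; simp only [mem_Ico] at hx; nlinarith [hx.2]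

lemma l1 : ∀ t ∈ Ioo (0:ℝ) 1, 2*t < Real.log (1+t) - Real.log (1-t) := by
  have h := pos_on_Ioo (f := fun t => Real.log (1+t) - Real.log (1-t) - 2*t)
    (f' := fun t => 1/(1+t) + 1/(1-t) - 2)
    (by exact (cont1p.sub cont1m).sub (by fun_prop))
    (fun t ht => by
      have h1 : (0:ℝ) < 1 + t := by nlinarith [ht.1]
      have h2 : (0:ℝ) < 1 - t := by nlinarith [ht.2]
      have := ((d_log1p h1).sub (d_log1m h2)).sub ((hasDerivAt_id t).const_mul 2)
      refine this.congr_deriv ?_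
      have h12 : (1:ℝ) - t^2 ≠ 0 := by nlinarith [ht.1, ht.2]
      field_simp
      ring)
    (fun t ht => by
      obtain ⟨ht1, ht2⟩ := ht
      have h1 : (0:ℝ) < 1 + t := by linarith
      have h2 : (0:ℝ) < 1 - t := by linarith
      have key : 1/(1+t) + 1/(1-t) - 2 = 2*t^2/((1+t)*(1-t)) := by
        field_simp
        ring
      rw [key]
      exact div_pos (by nlinarith) (by nlinarith))
    (by norm_num)
  intro t ht
  have := h t ht
  linarith

lemma l2 : ∀ t ∈ Ioo (0:ℝ) 1,
    Real.log (1+t^2) < (1+t)*Real.log (1+t) + (1-t)*Real.log (1-t) := by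
  have h := pos_on_Ioo
    (f := fun t => (1+t)*Real.log (1+t) + (1-t)*Real.log (1-t) - Real.log (1+t^2))
    (f' := fun t => Real.log (1+t) - Real.log (1-t) - 2*t/(1+t^2))
    (by
      apply ContinuousOn.sub
      · exact ((by fun_prop : ContinuousOn (fun u:ℝ => 1+u) (Ico 0 1)).mul cont1p).add
          ((by fun_prop : ContinuousOn (fun u:ℝ => 1-u) (Ico 0 1)).mul cont1m)
      · apply ContinuousOn.log (by fun_prop)
        intro x hx; positivity)
    (fun t ht => by
      have h1 : (0:ℝ) < 1 + t := by nlinarith [ht.1]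
      have h2 : (0:ℝ) < 1 - t := by nlinarith [ht.2]
      have hd1 := ((hasDerivAt_id t).const_add 1).mul (d_log1p h1)
      have hd2 := ((hasDerivAt_id t).const_sub 1).mul (d_log1m h2)
      have := (hd1.add hd2).sub (d_log1sq (t := t))
      refine this.congr_deriv ?_
      simp only [id]
      field_simp
      ring)
    (fun t ht => by
      obtain ⟨ht1, ht2⟩ := ht
      have hl := l1 t ⟨ht1, ht2⟩
      have h3 : (0:ℝ) < 1 + t^2 := by positivity
      have : 2*t/(1+t^2) ≤ 2*t := by
        rw [div_le_iff₀ h3]; nlinarith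
      linarith)
    (by norm_num)
  intro t ht
  have := h t ht
  linarith

lemma l3 : ∀ t ∈ Ioo (0:ℝ) 1,
    (1+t)*Real.log (1+t) - (1-t)*Real.log (1-t) < 2*t := by
  have h := pos_on_Ioo
    (f := fun t => 2*t - ((1+t)*Real.log (1+t) - (1-t)*Real.log (1-t)))
    (f' := fun t => -Real.log (1+t) - Real.log (1-t))
    (by
      apply ContinuousOn.sub (by fun_prop)
      exact ((by fun_prop : ContinuousOn (fun u:ℝ => 1+u) (Ico 0 1)).mul cont1p).sub
          ((by fun_prop : ContinuousOn (fun u:ℝ => 1-u) (Ico 0 1)).mul cont1m)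
      )
    (fun t ht => by
      have h1 : (0:ℝ) < 1 + t := by nlinarith [ht.1]
      have h2 : (0:ℝ) < 1 - t := by nlinarith [ht.2]
      have hd1 := ((hasDerivAt_id t).const_add 1).mul (d_log1p h1)
      have hd2 := ((hasDerivAt_id t).const_sub 1).mul (d_log1m h2)
      have := ((hasDerivAt_id t).const_mul 2).sub (hd1.sub hd2)
      refine this.congr_deriv ?_
      simp only [id]
      field_simp
      ring)
    (fun t ht => by
      obtain ⟨ht1, ht2⟩ := ht
      have h1 : Real.log (1+t) + Real.log (1-t) = Real.log (1-t^2) := by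
        rw [← Real.log_mul (by nlinarith) (by nlinarith)]
        ring_nf
      have h2 : Real.log (1-t^2) < 0 := Real.log_neg (by nlinarith) (by nlinarith)
      linarith)
    (by norm_num)
  intro t ht
  have := h t ht
  linarith

lemma key1 {x y : ℝ} (hy : 0 < y) (hxy : y < x) :
    ((x+y)/2) * Real.log ((x^2+y^2)/2) < x * Real.log x + y * Real.log y := by
  have hx : 0 < x := hy.trans hxy
  have hsum : 0 < x + y := by linarith
  set s : ℝ := (x+y)/2 with hs
  set t : ℝ := (x-y)/(x+y) with ht
  have hs0 : 0 < s := by positivity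
  have ht0 : t ∈ Ioo (0:ℝ) 1 :=
    ⟨div_pos (by linarith) hsum, (div_lt_one hsum).2 (by linarith)⟩
  have h1t : (0:ℝ) < 1 + t := by linarith [ht0.1]
  have h2t : (0:ℝ) < 1 - t := by linarith [ht0.2]
  have hxe : x = s*(1+t) := by
    rw [hs, ht]; field_simp; ring
  have hye : y = s*(1-t) := by
    rw [hs, ht]; field_simp; ring
  have hsq : ((s*(1+t))^2 + (s*(1-t))^2)/2 = s^2*(1+t^2) := by ring
  rw [hxe, hye, hsq]
  rw [Real.log_mul (by positivity) (by positivity),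
      Real.log_mul hs0.ne' h1t.ne', Real.log_mul hs0.ne' h2t.ne',
      Real.log_pow]
  have hl2 := l2 t ht0
  have := mul_lt_mul_of_pos_left hl2 hs0
  push_cast
  nlinarith [this]

lemma key2 {a b : ℝ} (hb : 0 < b) (hba : b < a) :
    (a * Real.log a - b * Real.log b) - (a - b) < (a - b) * Real.log ((a+b)/2) := by
  have ha : 0 < a := hb.trans hba
  have hsum : 0 < a + b := by linarith
  set s : ℝ := (a+b)/2 with hs
  set t : ℝ := (a-b)/(a+b) with ht
  have hs0 : 0 < s := by positivity
  have ht0 : t ∈ Ioo (0:ℝ) 1 :=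
    ⟨div_pos (by linarith) hsum, (div_lt_one hsum).2 (by linarith)⟩
  have h1t : (0:ℝ) < 1 + t := by linarith [ht0.1]
  have h2t : (0:ℝ) < 1 - t := by linarith [ht0.2]
  have hae : a = s*(1+t) := by rw [hs, ht]; field_simp; ring
  have hbe : b = s*(1-t) := by rw [hs, ht]; field_simp; ring
  have hl3 := l3 t ht0
  have hst : 0 < s * t := mul_pos hs0 ht0.1
  rw [hae, hbe]
  rw [Real.log_mul hs0.ne' h1t.ne', Real.log_mul hs0.ne' h2t.ne']
  nlinarith [mul_lt_mul_of_pos_left hl3 hs0]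

lemma I_eq {a b : ℝ} (ha : 0 < a) (hb : 0 < b) :
    I a b = Real.exp ((a * Real.log a - b * Real.log b)/(a-b) - 1) := by
  unfold I
  rw [Real.rpow_def_of_pos ha, Real.rpow_def_of_pos hb, ← Real.exp_sub,
      Real.rpow_def_of_pos (Real.exp_pos _), Real.log_exp, one_div (Real.exp 1),
      ← Real.exp_neg, ← Real.exp_add]
  congr 1
  ring

theorem stmt_10 (a b : ℝ) (ha : 0 < a) (hb : 0 < b) (hab : a ≠ b) :
    S (Q a b) (G a b) > A a b ∧ A a b > I a b := by
  have hG : 0 < G a b := Real.sqrt_pos.2 (mul_pos ha hb)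
  have hQG : G a b < Q a b := by
    unfold Q G
    apply Real.sqrt_lt_sqrt (mul_pos ha hb).le
    have hne : a - b ≠ 0 := sub_ne_zero.2 hab
    have : (a-b)^2 > 0 := by positivity
    nlinarith [this]
  have hQ : 0 < Q a b := hG.trans hQG
  have hAp : (0:ℝ) < (a+b)/2 := by linarith
  constructor
  · have key := key1 hG hQG
    have hx2 : (Q a b)^2 = (a^2+b^2)/2 := Real.sq_sqrt (by positivity)
    have hy2 : (G a b)^2 = a*b := Real.sq_sqrt (mul_pos ha hb).le
    have hs : ((Q a b)^2 + (G a b)^2)/2 = ((a+b)/2)^2 := by rw [hx2, hy2]; ring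
    rw [hs, Real.log_pow] at key
    push_cast at key
    have hxy : (0:ℝ) < Q a b + G a b := by linarith
    show A a b < S (Q a b) (G a b)
    unfold S A
    rw [Real.rpow_def_of_pos hQ, Real.rpow_def_of_pos hG, ← Real.exp_add,
        Real.rpow_def_of_pos (Real.exp_pos _), Real.log_exp]
    calc (a+b)/2 = Real.exp (Real.log ((a+b)/2)) := (Real.exp_log hAp).symm
      _ < _ := by
          apply Real.exp_lt_exp.2
          rw [mul_one_div, lt_div_iff₀ hxy]
          nlinarith [key]
  · rw [I_eq ha hb]
    show Real.exp _ < A a b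
    unfold A
    rw [← Real.exp_log hAp]
    apply Real.exp_lt_exp.2
    rcases hab.lt_or_gt with h | h
    · have k := key2 ha h
      have hba : (0:ℝ) < b - a := by linarith
      have he : (a*Real.log a - b*Real.log b)/(a-b)
          = (b*Real.log b - a*Real.log a)/(b-a) := by
        rw [← neg_div_neg_eq]; ring_nf
      rw [he, sub_lt_iff_lt_add, div_lt_iff₀ hba]
      have hc : (b+a) = (a+b) := add_comm b a
      rw [hc] at k
      nlinarith [k]
    · have k := key2 hb h
      have hab' : (0:ℝ) < a - b := by linarith
      rw [sub_lt_iff_lt_add, div_lt_iff₀ hab']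
      nlinarith [k]
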